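/- There exists a unital polynomial f(x) ∈ ℤ[x] with deg f(x) < 105 that is divisible by Φ_105(x) but admits no unital (3,5,7)-recurrent decomposition with respect to 105: there are no unital polynomials h_{35}(x), h_{21}(x), h_{15}(x) ∈ ℤ[x] with deg h_{35} < 35, deg h_{21} < 21, deg h_{15} < 15 such that f(x) = h_{35}(x)·G(105,35;x) + h_{21}(x)·G(105,21;x) + h_{15}(x)·G(105,15;x). An explicit example is f(x) = x^5+x^6+x^{10}+x^{25}+x^{27}+x^{35}+x^{40}+x^{48}+x^{50}+x^{65}+x^{69}+x^{70}+x^{80}+x^{85}+x^{95}+x^{100}. -/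

import Mathlib

open Polynomial

/-- The fundamental `r`-recurrent polynomial with respect to `n`:
`G(n,r;x) = 1 + x^r + x^{2r} + ⋯ + x^{n-r} = (x^n - 1)/(x^r - 1)`. -/
noncomputable def Gpoly (R : Type*) [Semiring R] (n r : ℕ) : Polynomial R :=
  ∑ l ∈ Finset.range (n / r), X ^ (l * r)

/-- A polynomial is unital if all of its coefficients lie in `{0, 1}`. -/
def IsUnitalPoly (f : Polynomial ℤ) : Prop :=
  ∀ i : ℕ, f.coeff i = 0 ∨ f.coeff i = 1

/-- The explicit counterexample
`f(x) = x^5+x^6+x^10+x^25+x^27+x^35+x^40+x^48+x^50+x^65+x^69+x^70+x^80+x^85+x^95+x^100`. -/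
noncomputable def fCounter : Polynomial ℤ :=
  X ^ 5 + X ^ 6 + X ^ 10 + X ^ 25 + X ^ 27 + X ^ 35 + X ^ 40 + X ^ 48 + X ^ 50 +
    X ^ 65 + X ^ 69 + X ^ 70 + X ^ 80 + X ^ 85 + X ^ 95 + X ^ 100

lemma G35eq : Gpoly ℤ 105 35 = 1 + X ^ 35 + X ^ 70 := by
  simp [Gpoly, Finset.sum_range_succ]

lemma G21eq : Gpoly ℤ 105 21 = 1 + X ^ 21 + X ^ 42 + X ^ 63 + X ^ 84 := by
  simp [Gpoly, Finset.sum_range_succ]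

lemma G15eq : Gpoly ℤ 105 15 = 1 + X ^ 15 + X ^ 30 + X ^ 45 + X ^ 60 + X ^ 75 + X ^ 90 := by
  simp [Gpoly, Finset.sum_range_succ]

lemma totient105 : Nat.totient 105 = 48 := by decide

set_option maxRecDepth 100000 in
lemma dvdG (r : ℕ) (hr : 0 < r) (hlt : (r : WithBot ℕ) < 48)
    (hmul : (X ^ r - 1) * Gpoly ℤ 105 r = X ^ 105 - 1) :
    cyclotomic 105 ℤ ∣ Gpoly ℤ 105 r := by
  have hprime : Prime (cyclotomic 105 ℤ) :=
    UniqueFactorizationMonoid.irreducible_iff_prime.mp (cyclotomic.irreducible (by norm_num))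
  have hdvd : cyclotomic 105 ℤ ∣ (X ^ r - 1) * Gpoly ℤ 105 r := by
    rw [hmul]; exact cyclotomic.dvd_X_pow_sub_one 105 ℤ
  rcases hprime.2.2 _ _ hdvd with h | h
  · exfalso
    have hne : (X ^ r - 1 : Polynomial ℤ) ≠ 0 := by
      have := X_pow_sub_C_ne_zero hr (1 : ℤ)
      simpa using this
    have hdeg := degree_le_of_dvd h hne
    rw [degree_cyclotomic] at hdeg
    have : degree ((X : Polynomial ℤ) ^ r - 1) = r := by
      have := degree_X_pow_sub_C hr (1 : ℤ)
      simpa using this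
    rw [this, totient105] at hdeg
    norm_num at hdeg hlt
    omega
  · exact h

theorem stmt_14 :
    ∃ f : Polynomial ℤ, f = fCounter ∧
      IsUnitalPoly f ∧ f.degree < 105 ∧ cyclotomic 105 ℤ ∣ f ∧
      ¬ ∃ h35 h21 h15 : Polynomial ℤ,
          IsUnitalPoly h35 ∧ IsUnitalPoly h21 ∧ IsUnitalPoly h15 ∧
          h35.degree < 35 ∧ h21.degree < 21 ∧ h15.degree < 15 ∧
          f = h35 * Gpoly ℤ 105 35 + h21 * Gpoly ℤ 105 21 + h15 * Gpoly ℤ 105 15 := by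
  refine ⟨fCounter, rfl, ?_, ?_, ?_, ?_⟩
  · -- unital
    intro i
    by_cases h : i ≤ 100
    · interval_cases i <;> norm_num [fCounter]
    · left
      simp only [fCounter, coeff_add, coeff_X_pow]
      rw [if_neg (by omega), if_neg (by omega), if_neg (by omega), if_neg (by omega),
        if_neg (by omega), if_neg (by omega), if_neg (by omega), if_neg (by omega),
        if_neg (by omega), if_neg (by omega), if_neg (by omega), if_neg (by omega),
        if_neg (by omega), if_neg (by omega), if_neg (by omega), if_neg (by omega)]
      norm_num
  · -- degree
    have h1 : fCounter.degree ≤ 100 := by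
      unfold fCounter
      compute_degree
    exact lt_of_le_of_lt h1 (by norm_num)
  · -- divisibility
    have d35 := dvdG 35 (by norm_num) (by norm_num) (by rw [G35eq]; ring)
    have d21 := dvdG 21 (by norm_num) (by norm_num) (by rw [G21eq]; ring)
    have d15 := dvdG 15 (by norm_num) (by norm_num) (by rw [G15eq]; ring)
    have key : fCounter =
        (1 + X ^ 5 + X ^ 10 + X ^ 15 + X ^ 25 + X ^ 30) * Gpoly ℤ 105 35
          + X ^ 6 * Gpoly ℤ 105 21 - Gpoly ℤ 105 15 := by
      rw [G35eq, G21eq, G15eq, fCounter]; ring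
    rw [key]
    exact dvd_sub (dvd_add (d35.mul_left _) (d21.mul_left _)) d15
  · -- no unital decomposition
    rintro ⟨h35, h21, h15, u35, u21, u15, d35, d21, d15, heq⟩
    rw [G35eq, G21eq, G15eq] at heq
    have z35 : ∀ i : ℕ, 35 ≤ i → h35.coeff i = 0 := fun i hi =>
      coeff_eq_zero_of_degree_lt (d35.trans_le (by exact_mod_cast hi))
    have z21 : ∀ i : ℕ, 21 ≤ i → h21.coeff i = 0 := fun i hi =>
      coeff_eq_zero_of_degree_lt (d21.trans_le (by exact_mod_cast hi))
    have z15 : ∀ i : ℕ, 15 ≤ i → h15.coeff i = 0 := fun i hi =>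
      coeff_eq_zero_of_degree_lt (d15.trans_le (by exact_mod_cast hi))
    have e75 := congrArg (fun p : Polynomial ℤ => p.coeff 75) heq
    have e26 := congrArg (fun p : Polynomial ℤ => p.coeff 26) heq
    have e20 := congrArg (fun p : Polynomial ℤ => p.coeff 20) heq
    have e5 := congrArg (fun p : Polynomial ℤ => p.coeff 5) heq
    simp only [fCounter] at e75 e26 e20 e5
    simp [mul_add, mul_one, coeff_add, coeff_mul_X_pow', coeff_X_pow,
      z35, z21, z15] at e75 e26 e20 e5
    have := u35 5; have := u21 12; have := u15 0
    have := u35 26; have := u21 5; have := u15 11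
    have := u35 20; have := u21 20; have := u15 5
    omega
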